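/- Let c > 0, let K : [0,∞) → ℝ be continuous and monotone decreasing, and let f solve f'' + K·f = 0 on [0,∞) with f(0) = c and f'(0) = 0. Suppose K(0) > 0, f(t) > 0 for all t ∈ [0,∞), and f'(t) = 0 for some t > 0. Then there exists a unique t₀ ∈ (0,∞) with f'(t₀) = 0, and moreover f'(t) < 0 on (0, t₀) and f'(t) > 0 on (t₀, ∞). -/

import Mathlib

open Set

/-- With `K` continuous and decreasing on `[0,∞)`, `f` a C² solution of
`f'' + K⬝f = 0` with `f 0 = c > 0`, `f' 0 = 0`, `K 0 > 0`, `f > 0` on `[0,∞)` and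
`f' t = 0` for some `t > 0`, there is a unique `t₀ ∈ (0,∞)` with `f' t₀ = 0`; moreover
`f' < 0` on `(0,t₀)` and `f' > 0` on `(t₀,∞)`. -/
theorem stmt2 (c : ℝ) (hc : 0 < c) (K f f' f'' : ℝ → ℝ)
    (hKcont : ContinuousOn K (Ici 0))
    (hKdec : AntitoneOn K (Ici 0))
    (hder1 : ∀ t ∈ Ici (0:ℝ), HasDerivWithinAt f (f' t) (Ici 0) t)
    (hder2 : ∀ t ∈ Ici (0:ℝ), HasDerivWithinAt f' (f'' t) (Ici 0) t)
    (hf''cont : ContinuousOn f'' (Ici 0))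
    (hode : ∀ t ∈ Ici (0:ℝ), f'' t + K t * f t = 0)
    (hf0 : f 0 = c) (hf'0 : f' 0 = 0)
    (hK0 : 0 < K 0)
    (hfpos : ∀ t ∈ Ici (0:ℝ), 0 < f t)
    (hzero : ∃ t > (0:ℝ), f' t = 0) :
    ∃ t₀ > (0:ℝ), f' t₀ = 0 ∧ (∀ t > (0:ℝ), f' t = 0 → t = t₀) ∧
      (∀ t ∈ Ioo (0:ℝ) t₀, f' t < 0) ∧ (∀ t ∈ Ioi t₀, 0 < f' t) := by
  have hf'cont : ContinuousOn f' (Ici 0) := fun t ht => (hder2 t ht).continuousWithinAt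
  -- ODE gives f'' = -(K * f)
  have hodef : ∀ t ∈ Ici (0:ℝ), f'' t = -(K t * f t) := by
    intro t ht; have := hode t ht; linarith
  -- f'' 0 < 0
  have hf''0 : f'' 0 < 0 := by
    have := hodef 0 Set.self_mem_Ici
    rw [hf0] at this
    nlinarith
  -- derivative of f' at interior points
  have hderiv : ∀ t : ℝ, 0 < t → deriv f' t = f'' t := by
    intro t ht
    exact ((hder2 t ht.le).hasDerivAt (Ici_mem_nhds ht)).deriv
  -- find δ > 0 such that f'' < 0 on Icc 0 δ
  obtain ⟨δ, hδ0, hδneg⟩ : ∃ δ > (0:ℝ), ∀ s ∈ Icc (0:ℝ) δ, f'' s < 0 := by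
    have htend : Filter.Tendsto f'' (nhdsWithin 0 (Ici 0)) (nhds (f'' 0)) := hf''cont 0 Set.self_mem_Ici
    have hev : ∀ᶠ s in nhdsWithin 0 (Ici (0:ℝ)), f'' s < 0 :=
      htend.eventually (eventually_lt_nhds hf''0)
    obtain ⟨u, hu, hsub⟩ := mem_nhdsGE_iff_exists_Icc_subset.1 hev
    exact ⟨u, hu, fun s hs => hsub hs⟩
  -- f' strictly decreasing on [0, δ]
  have hanti : StrictAntiOn f' (Icc 0 δ) := by
    apply strictAntiOn_of_deriv_neg (convex_Icc 0 δ)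
    · exact hf'cont.mono (Icc_subset_Ici_self)
    · intro x hx
      rw [interior_Icc] at hx
      rw [hderiv x hx.1]
      exact hδneg x ⟨hx.1.le, hx.2.le⟩
  have hneg_small : ∀ s ∈ Ioc (0:ℝ) δ, f' s < 0 := by
    intro s hs
    have := hanti ⟨le_rfl, hδ0.le⟩ ⟨hs.1.le, hs.2⟩ hs.1
    rwa [hf'0] at this
  -- the set of zeros
  set S : Set ℝ := {t | δ < t ∧ f' t = 0} with hS
  have hmemS : ∀ t : ℝ, 0 < t → f' t = 0 → t ∈ S := by
    intro t ht hft
    refine ⟨?_, hft⟩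
    by_contra h
    push_neg at h
    exact absurd hft (hneg_small t ⟨ht, h⟩).ne
  have hSne : S.Nonempty := by
    obtain ⟨t, ht, hft⟩ := hzero
    exact ⟨t, hmemS t ht hft⟩
  have hSbdd : BddBelow S := ⟨δ, fun t ht => ht.1.le⟩
  set C : Set ℝ := Ici δ ∩ f' ⁻¹' {0} with hC
  have hCclosed : IsClosed C :=
    (hf'cont.mono (Ici_subset_Ici.2 hδ0.le)).preimage_isClosed_of_isClosed isClosed_Ici
      isClosed_singleton
  have hSC : S ⊆ C := fun t ht => ⟨ht.1.le, ht.2⟩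
  set t₀ : ℝ := sInf S with ht₀
  have ht₀C : t₀ ∈ C := by
    have h1 : t₀ ∈ closure S := csInf_mem_closure hSne hSbdd
    exact hCclosed.closure_subset (closure_mono hSC h1)
  have ht₀δ : δ ≤ t₀ := ht₀C.1
  have hf't₀ : f' t₀ = 0 := ht₀C.2
  have ht₀pos : 0 < t₀ := lt_of_lt_of_le hδ0 ht₀δ
  have ht₀min : ∀ t : ℝ, 0 < t → f' t = 0 → t₀ ≤ t := fun t ht hft =>
    csInf_le hSbdd (hmemS t ht hft)
  have ht₀δ' : δ < t₀ := by
    rcases eq_or_lt_of_le ht₀δ with h | h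
    · exact absurd hf't₀ (by rw [← h]; exact (hneg_small δ ⟨hδ0, le_rfl⟩).ne)
    · exact h
  -- f' < 0 on (0, t₀)
  have hnegIoo : ∀ t ∈ Ioo (0:ℝ) t₀, f' t < 0 := by
    intro t ht
    rcases le_or_gt t δ with h | h
    · exact hneg_small t ⟨ht.1, h⟩
    · by_contra hge
      push_neg at hge
      rcases eq_or_lt_of_le hge with heq | hlt
      · linarith [ht₀min t ht.1 heq.symm, ht.2]
      · have hcont : ContinuousOn f' (Icc δ t) :=
          hf'cont.mono (fun x hx => le_trans hδ0.le hx.1)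
        have h0mem : (0:ℝ) ∈ Ioo (f' δ) (f' t) :=
          ⟨hneg_small δ ⟨hδ0, le_rfl⟩, hlt⟩
        obtain ⟨u, hu, hfu⟩ := intermediate_value_Ioo h.le hcont h0mem
        have := ht₀min u (lt_trans hδ0 hu.1) hfu
        linarith [ht.2, hu.2]
  -- K t₀ < 0
  have hKt₀ : K t₀ < 0 := by
    by_contra hge
    push_neg at hge
    have hanti2 : AntitoneOn f' (Icc 0 t₀) := by
      apply antitoneOn_of_deriv_nonpos (convex_Icc 0 t₀)
      · exact hf'cont.mono Icc_subset_Ici_self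
      · intro x hx
        rw [interior_Icc] at hx
        exact ((hder2 x hx.1.le).hasDerivAt (Ici_mem_nhds hx.1)).differentiableAt.differentiableWithinAt
      · intro x hx
        rw [interior_Icc] at hx
        rw [hderiv x hx.1, hodef x hx.1.le]
        have hKx : 0 ≤ K x := le_trans hge (hKdec hx.1.le (le_trans hx.1.le hx.2.le) hx.2.le)
        nlinarith [hfpos x hx.1.le]
    have h1 : f' t₀ ≤ f' δ := hanti2 ⟨hδ0.le, ht₀δ'.le⟩ ⟨ht₀pos.le, le_rfl⟩ ht₀δ'.le
    have h2 := hneg_small δ ⟨hδ0, le_rfl⟩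
    rw [hf't₀] at h1
    linarith
  -- f' strictly increasing on [t₀, ∞)
  have hmono : StrictMonoOn f' (Ici t₀) := by
    apply strictMonoOn_of_deriv_pos (convex_Ici t₀)
    · exact hf'cont.mono (Ici_subset_Ici.2 ht₀pos.le)
    · intro x hx
      rw [interior_Ici] at hx
      have hx0 : (0:ℝ) < x := lt_trans ht₀pos hx
      rw [hderiv x hx0, hodef x hx0.le]
      have hKx : K x ≤ K t₀ := hKdec ht₀pos.le hx0.le (le_of_lt hx)
      nlinarith [hfpos x hx0.le]
  have hposIoi : ∀ t ∈ Ioi t₀, 0 < f' t := by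
    intro t ht
    have := hmono (self_mem_Ici) (mem_Ici.2 (le_of_lt ht)) ht
    rwa [hf't₀] at this
  refine ⟨t₀, ht₀pos, hf't₀, ?_, hnegIoo, hposIoi⟩
  intro t ht hft
  rcases lt_trichotomy t t₀ with h | h | h
  · exact absurd hft (hnegIoo t ⟨ht, h⟩).ne
  · exact h
  · exact absurd hft (hposIoi t h).ne'
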